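/- Let r ≥ 1 and let m_1 ≥ m_2 ≥ … ≥ m_r ≥ 1 be integers. Let A_1, …, A_r be pairwise disjoint finite sets with |A_q| = m_q, and let H_r = (V, E) be the complete r-partite hypergraph with vertex set V = A_1 ∪ … ∪ A_r and hyperedges all sets {a_1, …, a_r} with a_q ∈ A_q for each q. Then the minimum weight of an edge-discriminator on H_r equals m_r + (1/2)·Σ_{q=1}^{r} (m_q − 1)·∏_{s=1}^{q} m_s. -/

import Mathlib

/-- `lam` is an edge-discriminator on the hypergraph whose hyperedge family is
the set `E` (vertices are natural numbers). -/
def IsEdgeDiscriminatorOn (E : Set (Finset ℕ)) (lam : ℕ → ℕ) : Prop :=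
  (∀ e ∈ E, 0 < ∑ v ∈ e, lam v) ∧
  (∀ e ∈ E, ∀ f ∈ E, e ≠ f → ∑ v ∈ e, lam v ≠ ∑ v ∈ f, lam v)

/-- The hyperedges of the complete `r`-partite hypergraph with parts
`A 1, …, A r`: all transversals `{a_1, …, a_r}` with `a_q ∈ A q`. -/
def rPartiteEdges (r : ℕ) (A : ℕ → Finset ℕ) : Set (Finset ℕ) :=
  {e | ∃ f : ℕ → ℕ, (∀ q ∈ Finset.Icc 1 r, f q ∈ A q) ∧
        e = (Finset.Icc 1 r).image f}

set_option linter.unusedSectionVars false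

section Aux
open Finset

lemma sum_lb (t : Finset ℕ) : t.card * (t.card - 1) ≤ 2 * ∑ x ∈ t, x := by
  induction t using Finset.induction_on_max with
  | empty => simp
  | insert a s ha ih =>
    have hsub : s ⊆ Finset.range a := fun x hx => Finset.mem_range.2 (ha x hx)
    have hc : s.card ≤ a := by simpa using Finset.card_le_card hsub
    have hna : a ∉ s := fun h => lt_irrefl a (ha a h)
    rw [Finset.card_insert_of_notMem hna, Finset.sum_insert hna]
    rcases Nat.eq_zero_or_pos s.card with h0 | h0
    · simp [h0]
    · have h1 : s.card * (s.card - 1) + 2 * s.card = (s.card + 1) * (s.card + 1 - 1) := by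
        cases s.card with
        | zero => simp
        | succ n => simp [Nat.succ_sub_one]; ring
      nlinarith [ih]

lemma sum_lb_pos (t : Finset ℕ) (ht : ∀ x ∈ t, 1 ≤ x) :
    t.card * (t.card + 1) ≤ 2 * ∑ x ∈ t, x := by
  induction t using Finset.induction_on_max with
  | empty => simp
  | insert a s ha ih =>
    have hsub : s ⊆ Finset.Ioo 0 a := fun x hx =>
      Finset.mem_Ioo.2 ⟨ht x (Finset.mem_insert_of_mem hx), ha x hx⟩
    have hc : s.card + 1 ≤ a := by
      have := Finset.card_le_card hsub
      have ha1 : 1 ≤ a := ht a (Finset.mem_insert_self a s)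
      simp [Nat.card_Ioo] at this
      omega
    have hna : a ∉ s := fun h => lt_irrefl a (ha a h)
    have ih' := ih (fun x hx => ht x (Finset.mem_insert_of_mem hx))
    rw [Finset.card_insert_of_notMem hna, Finset.sum_insert hna]
    have : (s.card + 1) * (s.card + 1 + 1) = s.card * (s.card + 1) + 2 * (s.card + 1) := by ring
    nlinarith [ih']


def Pq (m : ℕ → ℕ) (q : ℕ) : ℕ := ∏ s ∈ Finset.Icc 1 q, m s

lemma Pq_zero (m : ℕ → ℕ) : Pq m 0 = 1 := by simp [Pq]

lemma Pq_succ (m : ℕ → ℕ) (n : ℕ) : Pq m (n + 1) = Pq m n * m (n + 1) := by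
  simp [Pq, Finset.prod_Icc_succ_top (Nat.le_add_left 1 n)]

lemma Pq_pos (m : ℕ → ℕ) (n : ℕ) (hm : ∀ s ∈ Finset.Icc 1 n, 1 ≤ m s) : 0 < Pq m n := by
  apply Finset.prod_pos
  exact fun i hi => hm i hi

lemma mixed_lt (m d : ℕ → ℕ) :
    ∀ n, (∀ q ∈ Finset.Icc 1 n, 1 ≤ m q) → (∀ q ∈ Finset.Icc 1 n, d q < m q) →
      ∑ q ∈ Finset.Icc 1 n, Pq m (q - 1) * d q < Pq m n := by
  intro n
  induction n with
  | zero => intro _ _; simp [Pq_zero]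
  | succ n ih =>
    intro hm hd
    have hm' : ∀ q ∈ Finset.Icc 1 n, 1 ≤ m q := fun q hq => by
      simp at hq ⊢; exact hm q (by simp; omega)
    have hd' : ∀ q ∈ Finset.Icc 1 n, d q < m q := fun q hq => by
      simp at hq ⊢; exact hd q (by simp; omega)
    rw [Finset.sum_Icc_succ_top (Nat.le_add_left 1 n), Pq_succ]
    have h1 := ih hm' hd'
    have h2 : d (n + 1) < m (n + 1) := hd (n + 1) (by simp)
    have h3 : Pq m n * (d (n + 1) + 1) ≤ Pq m n * m (n + 1) :=
      Nat.mul_le_mul_left _ h2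
    simp only [Nat.add_sub_cancel]
    rw [Nat.mul_succ] at h3
    linarith

lemma digit_key (a b x y P : ℕ) (h1 : a < P) (h2 : b < P)
    (h3 : a + P * x = b + P * y) : x = y := by
  have hx : x ≤ y := by
    have hlt : P * x < P * (y + 1) := by rw [Nat.mul_succ]; linarith
    exact Nat.lt_succ_iff.mp (Nat.lt_of_mul_lt_mul_left hlt)
  have hy : y ≤ x := by
    have hlt : P * y < P * (x + 1) := by rw [Nat.mul_succ]; linarith
    exact Nat.lt_succ_iff.mp (Nat.lt_of_mul_lt_mul_left hlt)
  omega

lemma mixed_inj (m d d' : ℕ → ℕ) :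
    ∀ n, (∀ q ∈ Finset.Icc 1 n, 1 ≤ m q) → (∀ q ∈ Finset.Icc 1 n, d q < m q) →
      (∀ q ∈ Finset.Icc 1 n, d' q < m q) →
      (∑ q ∈ Finset.Icc 1 n, Pq m (q - 1) * d q = ∑ q ∈ Finset.Icc 1 n, Pq m (q - 1) * d' q) →
      ∀ q ∈ Finset.Icc 1 n, d q = d' q := by
  intro n
  induction n with
  | zero => intro _ _ _ _ q hq; simp at hq
  | succ n ih =>
    intro hm hd hd' heq
    have hm' : ∀ q ∈ Finset.Icc 1 n, 1 ≤ m q := fun q hq => by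
      simp at hq; exact hm q (by simp; omega)
    have hdn : ∀ q ∈ Finset.Icc 1 n, d q < m q := fun q hq => by
      simp at hq; exact hd q (by simp; omega)
    have hdn' : ∀ q ∈ Finset.Icc 1 n, d' q < m q := fun q hq => by
      simp at hq; exact hd' q (by simp; omega)
    have hlt := mixed_lt m d n hm' hdn
    have hlt' := mixed_lt m d' n hm' hdn'
    rw [Finset.sum_Icc_succ_top (Nat.le_add_left 1 n),
        Finset.sum_Icc_succ_top (Nat.le_add_left 1 n)] at heq
    simp only [Nat.add_sub_cancel] at heq
    -- deduce top digits equal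
    have htop : d (n + 1) = d' (n + 1) := digit_key _ _ _ _ _ hlt hlt' heq
    have hrest : ∑ q ∈ Finset.Icc 1 n, Pq m (q - 1) * d q
        = ∑ q ∈ Finset.Icc 1 n, Pq m (q - 1) * d' q := by
      rw [htop] at heq; omega
    intro q hq
    simp only [Finset.mem_Icc] at hq
    rcases Nat.lt_or_ge q (n + 1) with h | h
    · exact ih hm' hdn hdn' hrest q (by simp; omega)
    · have : q = n + 1 := by omega
      rw [this]; exact htop


/-- Abel summation identity over `Icc 1 r` in `ℚ`. -/
lemma abel_id (M y : ℕ → ℚ) :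
    ∀ r : ℕ, (∑ q ∈ Finset.Icc 1 r, (M q - M (q+1)) * (∑ s ∈ Finset.Icc 1 q, y s))
      + M (r+1) * (∑ s ∈ Finset.Icc 1 r, y s)
      = ∑ s ∈ Finset.Icc 1 r, M s * y s := by
  intro r
  induction r with
  | zero => simp
  | succ n ih =>
    rw [Finset.sum_Icc_succ_top (Nat.le_add_left 1 n),
        Finset.sum_Icc_succ_top (Nat.le_add_left 1 n),
        Finset.sum_Icc_succ_top (Nat.le_add_left 1 n)]
    rw [← ih]
    ring

/-- telescoping product identity over `Icc 1 r` in `ℚ`. -/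
lemma prod_id (M : ℕ → ℚ) :
    ∀ r : ℕ, (∑ q ∈ Finset.Icc 1 r,
        (M q - M (q+1)) * ((∏ s ∈ Finset.Icc 1 q, M s) - 1))
      + M (r+1) * ((∏ s ∈ Finset.Icc 1 r, M s) - 1)
      = ∑ q ∈ Finset.Icc 1 r, (M q - 1) * ∏ s ∈ Finset.Icc 1 q, M s := by
  intro r
  induction r with
  | zero => simp
  | succ n ih =>
    rw [Finset.sum_Icc_succ_top (Nat.le_add_left 1 n),
        Finset.sum_Icc_succ_top (Nat.le_add_left 1 n),
        Finset.prod_Icc_succ_top (Nat.le_add_left 1 n)]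
    rw [← ih]
    ring

lemma even_term (m : ℕ → ℕ) (q : ℕ) (hq : 1 ≤ q) :
    Even ((m q - 1) * ∏ s ∈ Finset.Icc 1 q, m s) := by
  obtain ⟨n, rfl⟩ : ∃ n, q = n + 1 := ⟨q - 1, by omega⟩
  rw [Finset.prod_Icc_succ_top (Nat.le_add_left 1 n)]
  rcases Nat.eq_zero_or_pos (m (n+1)) with h | h
  · simp [h]
  · obtain ⟨k, hk⟩ : ∃ k, m (n+1) = k + 1 := ⟨m (n+1) - 1, by omega⟩
    rw [hk]
    simp only [Nat.add_sub_cancel]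
    have : k * ((∏ s ∈ Finset.Icc 1 n, m s) * (k+1)) =
        (k * (k+1)) * ∏ s ∈ Finset.Icc 1 n, m s := by ring
    rw [this]
    exact (Nat.even_mul_succ_self k).mul_right _


/-- Transversals of the first `q` parts. -/
def TransE (A : ℕ → Finset ℕ) : ℕ → Finset (Finset ℕ)
  | 0 => {∅}
  | q + 1 => ((TransE A q) ×ˢ A (q + 1)).image fun p => insert p.2 p.1

section TransFacts

variable {r : ℕ} {A : ℕ → Finset ℕ}

lemma trans_subset : ∀ q, ∀ e ∈ TransE A q, e ⊆ (Finset.Icc 1 q).biUnion A := by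
  intro q
  induction q with
  | zero => intro e he; simp [TransE] at he; simp [he]
  | succ n ih =>
    intro e he
    simp only [TransE, Finset.mem_image, Finset.mem_product] at he
    obtain ⟨⟨e', a⟩, ⟨he', ha⟩, rfl⟩ := he
    intro v hv
    rcases Finset.mem_insert.mp hv with rfl | hv'
    · exact Finset.mem_biUnion.mpr ⟨n + 1, by simp, ha⟩
    · have := ih e' he' hv'
      rcases Finset.mem_biUnion.mp this with ⟨s, hs, hvs⟩
      simp only [Finset.mem_Icc] at hs
      exact Finset.mem_biUnion.mpr ⟨s, by simp [Finset.mem_Icc]; omega, hvs⟩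

variable (hdisj : ∀ i ∈ Finset.Icc 1 r, ∀ j ∈ Finset.Icc 1 r, i ≠ j →
      Disjoint (A i) (A j))
include hdisj

lemma new_not_mem {q : ℕ} (hq : q + 1 ≤ r) {a : ℕ} (ha : a ∈ A (q + 1)) :
    a ∉ (Finset.Icc 1 q).biUnion A := by
  intro hmem
  rcases Finset.mem_biUnion.mp hmem with ⟨s, hs, hvs⟩
  simp only [Finset.mem_Icc] at hs
  have hd := hdisj s (by simp [Finset.mem_Icc]; omega) (q + 1)
    (by simp [Finset.mem_Icc]; omega) (by omega)
  exact (Finset.disjoint_left.mp hd hvs) ha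

lemma insert_injOn {q : ℕ} (hq : q + 1 ≤ r) :
    ∀ p ∈ (TransE A q) ×ˢ A (q + 1), ∀ p' ∈ (TransE A q) ×ˢ A (q + 1),
      insert p.2 p.1 = insert p'.2 p'.1 → p = p' := by
  rintro ⟨e, a⟩ hp ⟨e', a'⟩ hp' heq
  simp only [Finset.mem_product] at hp hp'
  have hae : a ∉ e := fun h => new_not_mem hdisj hq hp.2 (trans_subset q e hp.1 h)
  have hae' : a ∉ e' := fun h => new_not_mem hdisj hq hp.2 (trans_subset q e' hp'.1 h)
  have ha'e : a' ∉ e' := fun h => new_not_mem hdisj hq hp'.2 (trans_subset q e' hp'.1 h)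
  have haa' : a = a' := by
    have : a ∈ insert a' e' := heq ▸ Finset.mem_insert_self a e
    rcases Finset.mem_insert.mp this with h | h
    · exact h
    · exact absurd h hae'
  subst haa'
  have : e = e' := by
    have h1 : (insert a e).erase a = e := Finset.erase_insert hae
    have h2 : (insert a e').erase a = e' := Finset.erase_insert ha'e
    rw [← h1, heq, h2]
  simp [this]

variable (m : ℕ → ℕ) (hcard : ∀ q ∈ Finset.Icc 1 r, (A q).card = m q)
include hcard

lemma trans_card : ∀ q, q ≤ r → (TransE A q).card = Pq m q := by
  intro q
  induction q with
  | zero => intro _; simp [TransE, Pq]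
  | succ n ih =>
    intro hq
    rw [TransE, Finset.card_image_of_injOn (insert_injOn hdisj hq),
      Finset.card_product, ih (by omega), Pq_succ,
      hcard (n + 1) (by simp [Finset.mem_Icc]; omega)]

omit hdisj hcard in
lemma trans_mem_edges : ∀ q, ∀ e ∈ TransE A q,
    ∃ f : ℕ → ℕ, (∀ s ∈ Finset.Icc 1 q, f s ∈ A s) ∧ e = (Finset.Icc 1 q).image f := by
  intro q
  induction q with
  | zero => intro e he; simp [TransE] at he; exact ⟨id, by simp, by simp [he]⟩
  | succ n ih =>
    intro e he
    simp only [TransE, Finset.mem_image, Finset.mem_product] at he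
    obtain ⟨⟨e', a⟩, ⟨he', ha⟩, rfl⟩ := he
    obtain ⟨f, hf, rfl⟩ := ih e' he'
    refine ⟨Function.update f (n + 1) a, ?_, ?_⟩
    · intro s hs
      simp only [Finset.mem_Icc] at hs
      rcases Nat.lt_or_ge s (n + 1) with h | h
      · rw [Function.update_of_ne (by omega)]
        exact hf s (by simp [Finset.mem_Icc]; omega)
      · have : s = n + 1 := by omega
        rw [this, Function.update_self]
        exact ha
    · have hicc : Finset.Icc 1 (n + 1) = insert (n + 1) (Finset.Icc 1 n) := by
        ext x; simp [Finset.mem_Icc]; omega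
      rw [hicc, Finset.image_insert, Function.update_self]
      congr 1
      apply Finset.image_congr
      intro s hs
      simp only [Finset.coe_Icc, Set.mem_Icc] at hs
      exact (Function.update_of_ne (by omega : s ≠ n + 1) _ _).symm

lemma trans_sum_rec (lam : ℕ → ℕ) {q : ℕ} (hq : q + 1 ≤ r) :
    ∑ e ∈ TransE A (q + 1), ∑ v ∈ e, lam v
      = m (q + 1) * (∑ e ∈ TransE A q, ∑ v ∈ e, lam v)
        + Pq m q * ∑ a ∈ A (q + 1), lam a := by
  rw [TransE, Finset.sum_image (insert_injOn hdisj hq)]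
  rw [Finset.sum_product]
  have hstep : ∀ e ∈ TransE A q, ∑ a ∈ A (q + 1), (∑ v ∈ insert a e, lam v)
      = (∑ a ∈ A (q + 1), lam a) + m (q + 1) * ∑ v ∈ e, lam v := by
    intro e he
    have : ∀ a ∈ A (q + 1), ∑ v ∈ insert a e, lam v = lam a + ∑ v ∈ e, lam v := by
      intro a ha
      rw [Finset.sum_insert (fun h => new_not_mem hdisj hq ha (trans_subset q e he h))]
    rw [Finset.sum_congr rfl this, Finset.sum_add_distrib, Finset.sum_const,
      hcard (q + 1) (by simp [Finset.mem_Icc]; omega), smul_eq_mul]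
  rw [Finset.sum_congr rfl hstep, Finset.sum_add_distrib, Finset.sum_const,
    trans_card hdisj m hcard q (by omega), smul_eq_mul, ← Finset.mul_sum]
  ring

end TransFacts


section Ext
variable {r : ℕ} {A : ℕ → Finset ℕ} {m : ℕ → ℕ} {lam : ℕ → ℕ}
variable (hm1 : ∀ q ∈ Finset.Icc 1 r, 1 ≤ m q)
variable (hcard : ∀ q ∈ Finset.Icc 1 r, (A q).card = m q)
variable (hdisj : ∀ i ∈ Finset.Icc 1 r, ∀ j ∈ Finset.Icc 1 r, i ≠ j → Disjoint (A i) (A j))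
variable (hlam : IsEdgeDiscriminatorOn (rPartiteEdges r A) lam)

/-- a default pick from each part -/
noncomputable def pick (A : ℕ → Finset ℕ) (s : ℕ) : ℕ :=
  if h : (A s).Nonempty then h.choose else 0

include hm1 hcard in
lemma pick_mem {s : ℕ} (hs : s ∈ Finset.Icc 1 r) : pick A s ∈ A s := by
  have hne : (A s).Nonempty := by
    rw [← Finset.card_pos, hcard s hs]; exact hm1 s hs
  simp only [pick, dif_pos hne]
  exact hne.choose_spec

include hm1 hcard in
lemma trans_ext {q : ℕ} (hq : q ≤ r) {e : Finset ℕ} (he : e ∈ TransE A q) :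
    e ∪ (Finset.Icc (q+1) r).image (pick A) ∈ rPartiteEdges r A := by
  obtain ⟨f, hf, hef⟩ := trans_mem_edges q e he
  refine ⟨fun s => if s ≤ q then f s else pick A s, ?_, ?_⟩
  · intro s hs
    simp only [Finset.mem_Icc] at hs
    by_cases h : s ≤ q
    · simp only [if_pos h]; exact hf s (by simp [Finset.mem_Icc]; omega)
    · simp only [if_neg h]; exact pick_mem hm1 hcard (by simp [Finset.mem_Icc]; omega)
  · have hicc : Finset.Icc 1 r = Finset.Icc 1 q ∪ Finset.Icc (q+1) r := by
      ext x; simp [Finset.mem_Icc]; omega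
    rw [hicc, Finset.image_union]
    congr 1
    · rw [hef]
      apply Finset.image_congr
      intro s hs
      simp only [Finset.coe_Icc, Set.mem_Icc] at hs
      simp [hs.2]
    · apply (Finset.image_congr _).symm
      intro s hs
      simp only [Finset.coe_Icc, Set.mem_Icc] at hs
      simp only [if_neg (by omega : ¬ s ≤ q)]

include hm1 hcard hdisj in
lemma ext_disj {q : ℕ} (hq : q ≤ r) {v : ℕ}
    (hv : v ∈ (Finset.Icc (q+1) r).image (pick A)) :
    v ∉ (Finset.Icc 1 q).biUnion A := by
  intro hmem
  rcases Finset.mem_biUnion.mp hmem with ⟨s, hs, hvs⟩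
  rcases Finset.mem_image.mp hv with ⟨t, ht, rfl⟩
  simp only [Finset.mem_Icc] at hs ht
  have hptA : pick A t ∈ A t := pick_mem hm1 hcard (by simp [Finset.mem_Icc]; omega)
  have hd := hdisj s (by simp [Finset.mem_Icc]; omega) t (by simp [Finset.mem_Icc]; omega)
    (by omega)
  exact (Finset.disjoint_left.mp hd hvs) hptA

include hm1 hcard hdisj hlam in
lemma trans_sum_injOn {q : ℕ} (hq : q ≤ r) :
    ∀ e ∈ TransE A q, ∀ e' ∈ TransE A q,
      (∑ v ∈ e, lam v) = (∑ v ∈ e', lam v) → e = e' := by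
  intro e he e' he' hsum
  by_contra hne
  set D := (Finset.Icc (q+1) r).image (pick A) with hD
  have heU := trans_subset q e he
  have heU' := trans_subset q e' he'
  have hdisjD : ∀ (x : Finset ℕ), x ⊆ (Finset.Icc 1 q).biUnion A → Disjoint x D := by
    intro x hx
    rw [Finset.disjoint_right]
    intro v hv
    exact fun hvx => ext_disj hm1 hcard hdisj hq hv (hx hvx)
  have hkey : ∀ (x : Finset ℕ), x ⊆ (Finset.Icc 1 q).biUnion A →
      (x ∪ D) ∩ ((Finset.Icc 1 q).biUnion A) = x := by
    intro x hx
    rw [Finset.union_inter_distrib_right, Finset.inter_eq_left.mpr hx]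
    have : D ∩ ((Finset.Icc 1 q).biUnion A) = ∅ := by
      rw [Finset.eq_empty_iff_forall_notMem]
      intro v hv
      rcases Finset.mem_inter.mp hv with ⟨h1, h2⟩
      exact ext_disj hm1 hcard hdisj hq h1 h2
    rw [this, Finset.union_empty]
  have hne' : e ∪ D ≠ e' ∪ D := by
    intro h
    apply hne
    rw [← hkey e heU, h, hkey e' heU']
  have hmem1 := trans_ext hm1 hcard hq he
  have hmem2 := trans_ext hm1 hcard hq he'
  have hs1 : ∑ v ∈ e ∪ D, lam v = (∑ v ∈ e, lam v) + ∑ v ∈ D, lam v :=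
    Finset.sum_union (hdisjD e heU)
  have hs2 : ∑ v ∈ e' ∪ D, lam v = (∑ v ∈ e', lam v) + ∑ v ∈ D, lam v :=
    Finset.sum_union (hdisjD e' heU')
  exact hlam.2 _ hmem1 _ hmem2 hne' (by rw [hs1, hs2, hsum])

include hm1 hcard hdisj hlam in
lemma W_lb {q : ℕ} (hq : q ≤ r) :
    Pq m q * (Pq m q - 1) ≤ 2 * ∑ e ∈ TransE A q, ∑ v ∈ e, lam v := by
  have hinj := trans_sum_injOn hm1 hcard hdisj hlam hq
  have h1 := sum_lb ((TransE A q).image (fun e => ∑ v ∈ e, lam v))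
  rw [Finset.sum_image hinj, Finset.card_image_of_injOn hinj,
    trans_card hdisj m hcard q hq] at h1
  exact h1

include hm1 hcard hdisj hlam in
lemma W_lb_top :
    Pq m r * (Pq m r + 1) ≤ 2 * ∑ e ∈ TransE A r, ∑ v ∈ e, lam v := by
  have hinj := trans_sum_injOn hm1 hcard hdisj hlam (le_refl r)
  have h1 := sum_lb_pos ((TransE A r).image (fun e => ∑ v ∈ e, lam v)) ?_
  · rw [Finset.sum_image hinj, Finset.card_image_of_injOn hinj,
      trans_card hdisj m hcard r (le_refl r)] at h1
    exact h1
  · intro x hx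
    rcases Finset.mem_image.mp hx with ⟨e, he, rfl⟩
    have hmem : e ∈ rPartiteEdges r A := by
      obtain ⟨f, hf, hef⟩ := trans_mem_edges r e he
      exact ⟨f, hf, hef⟩
    exact hlam.1 e hmem

end Ext


theorem lower_bound (r : ℕ) (hr : 1 ≤ r)
    (m : ℕ → ℕ) (A : ℕ → Finset ℕ)
    (hm1 : ∀ q ∈ Finset.Icc 1 r, 1 ≤ m q)
    (hmono : ∀ i ∈ Finset.Icc 1 r, ∀ j ∈ Finset.Icc 1 r, i ≤ j → m j ≤ m i)
    (hcard : ∀ q ∈ Finset.Icc 1 r, (A q).card = m q)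
    (hdisj : ∀ i ∈ Finset.Icc 1 r, ∀ j ∈ Finset.Icc 1 r, i ≠ j →
      Disjoint (A i) (A j))
    (lam : ℕ → ℕ) (hlam : IsEdgeDiscriminatorOn (rPartiteEdges r A) lam) :
    m r + (∑ q ∈ Finset.Icc 1 r, (m q - 1) * ∏ s ∈ Finset.Icc 1 q, m s) / 2
      ≤ ∑ v ∈ (Finset.Icc 1 r).biUnion A, lam v := by
  classical
  set S : ℕ → ℕ := fun q => ∑ a ∈ A q, lam a with hS
  set W : ℕ → ℕ := fun q => ∑ e ∈ TransE A q, ∑ v ∈ e, lam v with hW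
  set T : ℕ := ∑ q ∈ Finset.Icc 1 r, S q with hT
  -- the total weight equals T
  have hsplit : ∑ v ∈ (Finset.Icc 1 r).biUnion A, lam v = T := by
    rw [hT]
    apply Finset.sum_biUnion
    intro i hi j hj hij
    exact hdisj i hi j hj hij
  rw [hsplit]
  -- ℚ setup
  set M : ℕ → ℚ := fun q => if q ≤ r then (m q : ℚ) else 0 with hM
  set y : ℕ → ℚ := fun s => (S s : ℚ) / (m s : ℚ) with hy
  set Y : ℕ → ℚ := fun q => ∑ s ∈ Finset.Icc 1 q, y s with hY
  have hmne : ∀ s ∈ Finset.Icc 1 r, (m s : ℚ) ≠ 0 := by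
    intro s hs
    have := hm1 s hs
    positivity
  -- claim1 : (W q : ℚ) = P q * Y q
  have claim1 : ∀ q, q ≤ r → (W q : ℚ) = (Pq m q : ℚ) * Y q := by
    intro q
    induction q with
    | zero => intro _; simp [hW, hY, TransE, Pq]
    | succ n ih =>
      intro hn
      have hrecN : W (n+1) = m (n+1) * W n + Pq m n * S (n+1) :=
        trans_sum_rec hdisj m hcard lam hn
      have hrecQ : (W (n+1) : ℚ) = (m (n+1) : ℚ) * W n + (Pq m n : ℚ) * S (n+1) := by
        exact_mod_cast congrArg (Nat.cast : ℕ → ℚ) hrecN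
      have hYn : Y (n+1) = Y n + (S (n+1) : ℚ) / (m (n+1) : ℚ) := by
        rw [hY]
        exact Finset.sum_Icc_succ_top (Nat.le_add_left 1 n) _
      have hmnz : (m (n+1) : ℚ) ≠ 0 := hmne (n+1) (by simp [Finset.mem_Icc]; omega)
      rw [hrecQ, ih (by omega), hYn, Pq_succ]
      push_cast
      field_simp
  -- constraints
  have hPpos : ∀ q, q ≤ r → 0 < (Pq m q : ℚ) := by
    intro q hq
    have : 0 < Pq m q := Pq_pos m q (fun s hs => hm1 s (by
      simp only [Finset.mem_Icc] at hs ⊢; omega))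
    exact_mod_cast this
  have hP1 : ∀ q, q ≤ r → 1 ≤ Pq m q := by
    intro q hq
    have := Pq_pos m q (fun s hs => hm1 s (by
      simp only [Finset.mem_Icc] at hs ⊢; omega))
    omega
  have hcon : ∀ q ∈ Finset.Icc 1 r, ((Pq m q : ℚ) - 1) / 2 ≤ Y q := by
    intro q hq
    simp only [Finset.mem_Icc] at hq
    have hb := W_lb hm1 hcard hdisj hlam (show q ≤ r by omega)
    have hbN : Pq m q * (Pq m q - 1) ≤ 2 * W q := hb
    have hbQ : (Pq m q : ℚ) * ((Pq m q : ℚ) - 1) ≤ 2 * ((Pq m q : ℚ) * Y q) := by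
      rw [← claim1 q (by omega)]
      have h1 : ((Pq m q * (Pq m q - 1) : ℕ) : ℚ) ≤ ((2 * W q : ℕ) : ℚ) := by
        exact_mod_cast hbN
      push_cast [Nat.cast_sub (hP1 q (by omega))] at h1
      convert h1 using 2
    rw [div_le_iff₀ (by norm_num : (0:ℚ) < 2)]
    have hp := hPpos q (by omega)
    nlinarith
  have hcontop : ((Pq m r : ℚ) + 1) / 2 ≤ Y r := by
    have hb : Pq m r * (Pq m r + 1) ≤ 2 * W r := W_lb_top hm1 hcard hdisj hlam
    have hbQ : (Pq m r : ℚ) * ((Pq m r : ℚ) + 1) ≤ 2 * ((Pq m r : ℚ) * Y r) := by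
      rw [← claim1 r (le_refl r)]
      exact_mod_cast hb
    rw [div_le_iff₀ (by norm_num : (0:ℚ) < 2)]
    have hp := hPpos r (le_refl r)
    nlinarith
  -- Abel
  have habel := abel_id M y r
  have hMtop : M (r+1) = 0 := by simp [hM]
  have hRHS : ∑ s ∈ Finset.Icc 1 r, M s * y s = (T : ℚ) := by
    rw [hT]
    push_cast
    apply Finset.sum_congr rfl
    intro s hs
    rw [hM, hy]
    simp only [Finset.mem_Icc] at hs
    simp only [if_pos (show s ≤ r by omega)]
    rw [mul_div_cancel₀]
    exact hmne s (by simp [Finset.mem_Icc]; omega)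
  rw [hMtop, zero_mul, add_zero, hRHS] at habel
  -- bound each Abel term
  have hmu_nonneg : ∀ q ∈ Finset.Icc 1 r, 0 ≤ M q - M (q+1) := by
    intro q hq
    simp only [Finset.mem_Icc] at hq
    rw [hM]
    by_cases h : q + 1 ≤ r
    · simp only [if_pos (show q ≤ r by omega), if_pos h, sub_nonneg]
      exact_mod_cast hmono q (by simp [Finset.mem_Icc]; omega) (q+1)
        (by simp [Finset.mem_Icc]; omega) (by omega)
    · simp only [if_pos (show q ≤ r by omega), if_neg h, sub_zero]
      positivity
  have hbound : ∑ q ∈ Finset.Icc 1 r,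
      (M q - M (q+1)) * (((Pq m q : ℚ) - 1)/2 + if q = r then 1 else 0) ≤ (T : ℚ) := by
    rw [← habel]
    apply Finset.sum_le_sum
    intro q hq
    apply mul_le_mul_of_nonneg_left _ (hmu_nonneg q hq)
    by_cases h : q = r
    · subst h
      rw [if_pos rfl]
      have := hcontop
      have : ((Pq m q : ℚ) + 1) / 2 = ((Pq m q : ℚ) - 1) / 2 + 1 := by ring
      linarith [hcontop]
    · rw [if_neg h, add_zero]
      exact hcon q hq
  -- compute the left side of hbound
  have hsum_split : ∑ q ∈ Finset.Icc 1 r,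
      (M q - M (q+1)) * (((Pq m q : ℚ) - 1)/2 + if q = r then 1 else 0)
      = (∑ q ∈ Finset.Icc 1 r, (M q - M (q+1)) * ((Pq m q : ℚ) - 1))/2
        + (m r : ℚ) := by
    have hterm : ∀ q ∈ Finset.Icc 1 r,
        (M q - M (q+1)) * (((Pq m q : ℚ) - 1)/2 + if q = r then 1 else 0)
        = (M q - M (q+1)) * ((Pq m q : ℚ) - 1)/2
          + (if q = r then M q - M (q+1) else 0) := by
      intro q hq
      by_cases h : q = r
      · simp only [if_pos h]; ring
      · simp only [if_neg h]; ring
    rw [Finset.sum_congr rfl hterm, Finset.sum_add_distrib, Finset.sum_ite_eq',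
      if_pos (by simp [Finset.mem_Icc]; omega : r ∈ Finset.Icc 1 r), ← Finset.sum_div]
    congr 1
    rw [hM]
    simp only [if_pos (le_refl r), if_neg (by omega : ¬ r + 1 ≤ r), sub_zero]
  -- the product identity
  have hprod := prod_id M r
  rw [hMtop, zero_mul, add_zero] at hprod
  have hG : ∀ q ∈ Finset.Icc 1 r, (∏ s ∈ Finset.Icc 1 q, M s) = (Pq m q : ℚ) := by
    intro q hq
    simp only [Finset.mem_Icc] at hq
    rw [Pq]
    push_cast
    apply Finset.prod_congr rfl
    intro s hs
    simp only [Finset.mem_Icc] at hs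
    rw [hM]
    simp only [if_pos (show s ≤ r by omega)]
  have hleft : ∑ q ∈ Finset.Icc 1 r, (M q - M (q+1)) * ((Pq m q : ℚ) - 1)
      = ∑ q ∈ Finset.Icc 1 r, ((m q : ℚ) - 1) * (Pq m q : ℚ) := by
    calc ∑ q ∈ Finset.Icc 1 r, (M q - M (q+1)) * ((Pq m q : ℚ) - 1)
        = ∑ q ∈ Finset.Icc 1 r, (M q - M (q+1)) * ((∏ s ∈ Finset.Icc 1 q, M s) - 1) :=
          Finset.sum_congr rfl (fun q hq => by rw [hG q hq])
      _ = ∑ q ∈ Finset.Icc 1 r, (M q - 1) * ∏ s ∈ Finset.Icc 1 q, M s := hprod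
      _ = ∑ q ∈ Finset.Icc 1 r, ((m q : ℚ) - 1) * (Pq m q : ℚ) := by
          apply Finset.sum_congr rfl
          intro q hq
          rw [hG q hq]
          simp only [Finset.mem_Icc] at hq
          rw [hM]
          simp only [if_pos (show q ≤ r by omega)]
  -- cast the even natural number EN
  have hEN : ∑ q ∈ Finset.Icc 1 r, ((m q : ℚ) - 1) * (Pq m q : ℚ)
      = ((∑ q ∈ Finset.Icc 1 r, (m q - 1) * Pq m q : ℕ) : ℚ) := by
    push_cast
    apply Finset.sum_congr rfl
    intro q hq
    rw [Nat.cast_sub (hm1 q hq)]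
    push_cast
    ring
  set EN : ℕ := ∑ q ∈ Finset.Icc 1 r, (m q - 1) * Pq m q with hENdef
  -- final inequality over ℚ
  have hfinal : ((EN : ℚ))/2 + (m r : ℚ) ≤ (T : ℚ) := by
    rw [← hEN, ← hleft, ← hsum_split]
    exact hbound
  have hfinalN : EN + 2 * m r ≤ 2 * T := by
    have h2 : ((EN + 2 * m r : ℕ) : ℚ) ≤ ((2 * T : ℕ) : ℚ) := by
      push_cast
      linarith
    exact_mod_cast h2
  have heven : Even EN := by
    rw [hENdef]
    apply Finset.even_sum
    intro q hq
    simp only [Finset.mem_Icc] at hq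
    exact even_term m q hq.1
  obtain ⟨k, hk⟩ := heven
  have hgoal : ∑ q ∈ Finset.Icc 1 r, (m q - 1) * ∏ s ∈ Finset.Icc 1 q, m s = EN := rfl
  rw [hgoal]
  omega


/-- rank of `v` inside `A q` -/
def rnk (A : ℕ → Finset ℕ) (q v : ℕ) : ℕ := ((A q).filter (fun x => x < v)).card

/-- the optimal edge-discriminator -/
def lam0 (r : ℕ) (m : ℕ → ℕ) (A : ℕ → Finset ℕ) (v : ℕ) : ℕ :=
  ∑ q ∈ Finset.Icc 1 r,
    (if v ∈ A q then Pq m (q-1) * rnk A q v + (if q = r then 1 else 0) else 0)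

lemma rnk_lt {A : ℕ → Finset ℕ} {q v : ℕ} (hv : v ∈ A q) : rnk A q v < (A q).card := by
  apply Finset.card_lt_card
  constructor
  · exact Finset.filter_subset _ _
  · intro hsub
    have := hsub hv
    simp at this

lemma rnk_inj {A : ℕ → Finset ℕ} {q v w : ℕ} (hv : v ∈ A q) (hw : w ∈ A q)
    (h : rnk A q v = rnk A q w) : v = w := by
  by_contra hne
  have key : ∀ a b : ℕ, a ∈ A q → b ∈ A q → a < b → rnk A q a < rnk A q b := by
    intro a b ha hb hab
    apply Finset.card_lt_card
    constructor
    · intro x hx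
      simp only [Finset.mem_filter] at hx ⊢
      exact ⟨hx.1, by omega⟩
    · intro hsub
      have : a ∈ (A q).filter (fun x => x < b) := by
        simp only [Finset.mem_filter]; exact ⟨ha, hab⟩
      have := hsub this
      simp only [Finset.mem_filter] at this
      omega
  rcases Nat.lt_or_ge v w with hlt | hge
  · exact absurd h (Nat.ne_of_lt (key v w hv hw hlt))
  · have : w < v := by omega
    exact absurd h.symm (Nat.ne_of_lt (key w v hw hv this))

lemma rnk_sum {A : ℕ → Finset ℕ} (q : ℕ) :
    ∑ v ∈ A q, rnk A q v = ∑ i ∈ Finset.range (A q).card, i := by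
  have hinj : ∀ v ∈ A q, ∀ w ∈ A q, rnk A q v = rnk A q w → v = w :=
    fun v hv w hw h => rnk_inj hv hw h
  have himg : (A q).image (rnk A q) = Finset.range (A q).card := by
    apply Finset.eq_of_subset_of_card_le
    · intro x hx
      rcases Finset.mem_image.mp hx with ⟨v, hv, rfl⟩
      exact Finset.mem_range.mpr (rnk_lt hv)
    · rw [Finset.card_range, Finset.card_image_of_injOn hinj]
  calc ∑ v ∈ A q, rnk A q v = ∑ x ∈ (A q).image (rnk A q), x := (Finset.sum_image (g := rnk A q) (f := fun x => x) hinj).symm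
    _ = ∑ i ∈ Finset.range (A q).card, i := by rw [himg]



section Upper
variable {r : ℕ} {m : ℕ → ℕ} {A : ℕ → Finset ℕ}
variable (hr : 1 ≤ r)
variable (hm1 : ∀ q ∈ Finset.Icc 1 r, 1 ≤ m q)
variable (hcard : ∀ q ∈ Finset.Icc 1 r, (A q).card = m q)
variable (hdisj : ∀ i ∈ Finset.Icc 1 r, ∀ j ∈ Finset.Icc 1 r, i ≠ j → Disjoint (A i) (A j))

include hdisj in
lemma lam0_eq {q v : ℕ} (hq : q ∈ Finset.Icc 1 r) (hv : v ∈ A q) :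
    lam0 r m A v = Pq m (q-1) * rnk A q v + (if q = r then 1 else 0) := by
  rw [lam0, Finset.sum_eq_single q]
  · rw [if_pos hv]
  · intro q' hq' hne
    rw [if_neg]
    exact fun hv' => (Finset.disjoint_left.mp (hdisj q' hq' q hq hne) hv') hv
  · intro h; exact absurd hq h

include hdisj in
lemma choice_injOn {f : ℕ → ℕ} (hf : ∀ q ∈ Finset.Icc 1 r, f q ∈ A q) :
    ∀ i ∈ Finset.Icc 1 r, ∀ j ∈ Finset.Icc 1 r, f i = f j → i = j := by
  intro i hi j hj hij
  by_contra hne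
  exact (Finset.disjoint_left.mp (hdisj i hi j hj hne) (hf i hi)) (hij ▸ hf j hj)

include hr hdisj in
lemma edge_sum {f : ℕ → ℕ} (hf : ∀ q ∈ Finset.Icc 1 r, f q ∈ A q) :
    ∑ v ∈ (Finset.Icc 1 r).image f, lam0 r m A v
      = (∑ q ∈ Finset.Icc 1 r, Pq m (q-1) * rnk A q (f q)) + 1 := by
  rw [Finset.sum_image (choice_injOn hdisj hf)]
  have hterm : ∀ q ∈ Finset.Icc 1 r, lam0 r m A (f q)
      = Pq m (q-1) * rnk A q (f q) + (if q = r then 1 else 0) := by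
    intro q hq
    exact lam0_eq hdisj hq (hf q hq)
  rw [Finset.sum_congr rfl hterm, Finset.sum_add_distrib, Finset.sum_ite_eq',
    if_pos (by simp [Finset.mem_Icc]; omega : r ∈ Finset.Icc 1 r)]

include hr hm1 hcard hdisj in
lemma lam0_discriminator : IsEdgeDiscriminatorOn (rPartiteEdges r A) (lam0 r m A) := by
  constructor
  · rintro e ⟨f, hf, rfl⟩
    rw [edge_sum hr hdisj hf]
    omega
  · rintro e ⟨f, hf, rfl⟩ e' ⟨g, hg, rfl⟩ hne hsum
    rw [edge_sum hr hdisj hf, edge_sum hr hdisj hg] at hsum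
    have hsum' : ∑ q ∈ Finset.Icc 1 r, Pq m (q-1) * rnk A q (f q)
        = ∑ q ∈ Finset.Icc 1 r, Pq m (q-1) * rnk A q (g q) := by omega
    have hd : ∀ q ∈ Finset.Icc 1 r, rnk A q (f q) < m q := by
      intro q hq
      rw [← hcard q hq]
      exact rnk_lt (hf q hq)
    have hd' : ∀ q ∈ Finset.Icc 1 r, rnk A q (g q) < m q := by
      intro q hq
      rw [← hcard q hq]
      exact rnk_lt (hg q hq)
    have heqd := mixed_inj m (fun q => rnk A q (f q)) (fun q => rnk A q (g q))
      r hm1 hd hd' hsum'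
    apply hne
    apply Finset.image_congr
    intro q hq
    simp only [Finset.coe_Icc, Set.mem_Icc] at hq
    have hq' : q ∈ Finset.Icc 1 r := by simp [Finset.mem_Icc]; omega
    exact rnk_inj (hf q hq') (hg q hq') (heqd q hq')

include hr hm1 hcard hdisj in
lemma lam0_weight :
    ∑ v ∈ (Finset.Icc 1 r).biUnion A, lam0 r m A v
      = m r + (∑ q ∈ Finset.Icc 1 r, (m q - 1) * ∏ s ∈ Finset.Icc 1 q, m s) / 2 := by
  have hsplit : ∑ v ∈ (Finset.Icc 1 r).biUnion A, lam0 r m A v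
      = ∑ q ∈ Finset.Icc 1 r, ∑ v ∈ A q, lam0 r m A v :=
    Finset.sum_biUnion (fun i hi j hj hij => hdisj i hi j hj hij)
  have hpart : ∀ q ∈ Finset.Icc 1 r, ∑ v ∈ A q, lam0 r m A v
      = Pq m (q-1) * (∑ i ∈ Finset.range (m q), i) + (if q = r then m q else 0) := by
    intro q hq
    have h1 : ∀ v ∈ A q, lam0 r m A v
        = Pq m (q-1) * rnk A q v + (if q = r then 1 else 0) :=
      fun v hv => lam0_eq hdisj hq hv
    rw [Finset.sum_congr rfl h1, Finset.sum_add_distrib, ← Finset.mul_sum,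
      rnk_sum, hcard q hq, Finset.sum_const, hcard q hq, smul_eq_mul]
    by_cases h : q = r <;> simp [h]
  rw [hsplit, Finset.sum_congr rfl hpart, Finset.sum_add_distrib, Finset.sum_ite_eq',
    if_pos (by simp [Finset.mem_Icc]; omega : r ∈ Finset.Icc 1 r)]
  -- now: ∑ q, Pq m (q-1) * gauss(m q) + m r = m r + EN / 2
  have hterm2 : ∀ q ∈ Finset.Icc 1 r,
      2 * (Pq m (q-1) * (∑ i ∈ Finset.range (m q), i))
        = (m q - 1) * ∏ s ∈ Finset.Icc 1 q, m s := by
    intro q hq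
    simp only [Finset.mem_Icc] at hq
    have hgauss : (∑ i ∈ Finset.range (m q), i) * 2 = m q * (m q - 1) :=
      Finset.sum_range_id_mul_two (m q)
    obtain ⟨n, rfl⟩ : ∃ n, q = n + 1 := ⟨q - 1, by omega⟩
    have hPq : ∏ s ∈ Finset.Icc 1 (n+1), m s = Pq m n * m (n+1) := Pq_succ m n
    rw [hPq]
    simp only [Nat.add_sub_cancel]
    calc 2 * (Pq m n * ∑ i ∈ Finset.range (m (n+1)), i)
        = Pq m n * ((∑ i ∈ Finset.range (m (n+1)), i) * 2) := by ring
      _ = Pq m n * (m (n+1) * (m (n+1) - 1)) := by rw [hgauss]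
      _ = (m (n+1) - 1) * (Pq m n * m (n+1)) := by ring
  have h2 : 2 * ∑ q ∈ Finset.Icc 1 r, Pq m (q-1) * (∑ i ∈ Finset.range (m q), i)
      = ∑ q ∈ Finset.Icc 1 r, (m q - 1) * ∏ s ∈ Finset.Icc 1 q, m s := by
    rw [Finset.mul_sum]
    exact Finset.sum_congr rfl hterm2
  have heven : Even (∑ q ∈ Finset.Icc 1 r, (m q - 1) * ∏ s ∈ Finset.Icc 1 q, m s) := by
    apply Finset.even_sum
    intro q hq
    simp only [Finset.mem_Icc] at hq
    exact even_term m q hq.1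
  obtain ⟨k, hk⟩ := heven
  omega

end Upper

end Aux

theorem complete_r_partite_optimum (r : ℕ) (hr : 1 ≤ r)
    (m : ℕ → ℕ) (A : ℕ → Finset ℕ)
    (hm1 : ∀ q ∈ Finset.Icc 1 r, 1 ≤ m q)
    (hmono : ∀ i ∈ Finset.Icc 1 r, ∀ j ∈ Finset.Icc 1 r, i ≤ j → m j ≤ m i)
    (hcard : ∀ q ∈ Finset.Icc 1 r, (A q).card = m q)
    (hdisj : ∀ i ∈ Finset.Icc 1 r, ∀ j ∈ Finset.Icc 1 r, i ≠ j →
      Disjoint (A i) (A j)) :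
    IsLeast {w : ℕ | ∃ lam : ℕ → ℕ,
        IsEdgeDiscriminatorOn (rPartiteEdges r A) lam ∧
        ∑ v ∈ (Finset.Icc 1 r).biUnion A, lam v = w}
      (m r + (∑ q ∈ Finset.Icc 1 r, (m q - 1) * ∏ s ∈ Finset.Icc 1 q, m s) / 2) := by
  constructor
  · exact ⟨lam0 r m A, lam0_discriminator hr hm1 hcard hdisj,
      lam0_weight hr hm1 hcard hdisj⟩
  · rintro w ⟨lam, hlam, rfl⟩
    exact lower_bound r hr m A hm1 hmono hcard hdisj lam hlam
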